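/- arXiv:1612.01673 — 2 statements merged into one kernel-verified Lean document; each statement's English description precedes it below -/
import Mathlib

section
/- Let (X, 𝒜, μ) be a monotone measure space with μ subadditive. Then for every measurable f : X → [0, ∞] and all A, B ∈ 𝒜 with A ∩ B = ∅, ∫_{A∪B}^pan f dμ = ∫_A^pan f dμ + ∫_B^pan f dμ. -/
open Set Filter
open scoped ENNReal NNReal Topology

variable {X : Type*}

/-- A monotone measure: vanishes on the empty set, positive on the whole space,
and monotone on measurable sets. -/
structure MonotoneMeasure [MeasurableSpace X] (mu : Set X → ℝ≥0∞) : Prop where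
  empty : mu ∅ = 0
  univ_pos : 0 < mu Set.univ
  mono : ∀ ⦃A B : Set X⦄, MeasurableSet A → MeasurableSet B → A ⊆ B → mu A ≤ mu B

/-- A finite measurable partition of `X`. -/
def IsPanPartition [MeasurableSpace X] {n : ℕ} (A : Fin n → Set X) : Prop :=
  (∀ i, MeasurableSet (A i)) ∧ Pairwise (Function.onFun Disjoint A) ∧ (⋃ i, A i) = Set.univ

/-- The `(+,·)`-based pan-integral of a nonnegative function on `X`. -/
noncomputable def panIntegral [MeasurableSpace X] (mu : Set X → ℝ≥0∞) (f : X → ℝ≥0∞) : ℝ≥0∞ :=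
  ⨆ (n : ℕ) (A : Fin n → Set X) (_ : IsPanPartition A) (lam : Fin n → ℝ≥0)
    (_ : ∀ x, ∑ i, Set.indicator (A i) (fun _ => (lam i : ℝ≥0∞)) x ≤ f x),
    ∑ i, (lam i : ℝ≥0∞) * mu (A i)

/-- The pan-integral of `f` on a set `A`, i.e. the pan-integral of `f·χ_A` on `X`. -/
noncomputable def panIntegralOn [MeasurableSpace X] (mu : Set X → ℝ≥0∞) (f : X → ℝ≥0∞)
    (A : Set X) : ℝ≥0∞ :=
  panIntegral mu (A.indicator f)

/-- Subadditivity of a set function. -/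
def PanSubadditive [MeasurableSpace X] (mu : Set X → ℝ≥0∞) : Prop :=
  ∀ ⦃A B : Set X⦄, MeasurableSet A → MeasurableSet B → mu (A ∪ B) ≤ mu A + mu B

/-- Null-additivity of a set function. -/
def PanNullAdditive [MeasurableSpace X] (mu : Set X → ℝ≥0∞) : Prop :=
  ∀ ⦃A B : Set X⦄, MeasurableSet A → MeasurableSet B → mu B = 0 → mu (A ∪ B) = mu A

/-- Continuity from below of a set function. -/
def PanContinuousFromBelow [MeasurableSpace X] (mu : Set X → ℝ≥0∞) : Prop :=
  ∀ E : ℕ → Set X, (∀ n, MeasurableSet (E n)) → Monotone E →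
    Filter.Tendsto (fun n => mu (E n)) Filter.atTop (nhds (mu (⋃ n, E n)))

/-- A real-valued function is pan-integrable if the pan-integrals of its
positive and negative parts are both finite. -/
def PanIntegrable [MeasurableSpace X] (mu : Set X → ℝ≥0∞) (f : X → ℝ) : Prop :=
  panIntegral mu (fun x => ENNReal.ofReal (f x)) < ⊤ ∧
    panIntegral mu (fun x => ENNReal.ofReal (-f x)) < ⊤

/-- The symmetric pan-integral of a real-valued function:
`∫ f⁺ dμ − ∫ f⁻ dμ`. -/
noncomputable def panIntegralReal [MeasurableSpace X] (mu : Set X → ℝ≥0∞) (f : X → ℝ) : ℝ :=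
  (panIntegral mu (fun x => ENNReal.ofReal (f x))).toReal -
    (panIntegral mu (fun x => ENNReal.ofReal (-f x))).toReal

/-- The `‖·‖_{μ,p}` functional: `(∫_E^pan |f|^p dμ)^(1/p)`. -/
noncomputable def panNorm [MeasurableSpace X] (mu : Set X → ℝ≥0∞) (E : Set X) (p : ℝ)
    (f : X → ℝ) : ℝ≥0∞ :=
  (panIntegralOn mu (fun x => ENNReal.ofReal (|f x| ^ p)) E) ^ (1 / p)

section PanAux

variable [MeasurableSpace X] {mu : Set X → ℝ≥0∞}

/-- In a pairwise disjoint family, the indicator sum at a point of `C k` equals `v k`. -/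
lemma sum_indicator_of_mem' {ι : Type*} [Fintype ι] {C : ι → Set X}
    (hdisj : Pairwise (Function.onFun Disjoint C)) {k : ι} {x : X} (hx : x ∈ C k)
    (v : ι → ℝ≥0∞) :
    ∑ i, (C i).indicator (fun _ => v i) x = v k := by
  rw [Finset.sum_eq_single k]
  · rw [Set.indicator_of_mem hx]
  · intro i _ hik
    have hxi : x ∉ C i := fun hxi => Set.disjoint_left.mp (hdisj hik) hxi hx
    rw [Set.indicator_of_notMem hxi]
  · intro h; exact absurd (Finset.mem_univ k) h

/-- Finite subadditivity for a subadditive monotone measure. -/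
lemma mu_iUnion_le (hmu : MonotoneMeasure mu) (hsub : PanSubadditive mu) :
    ∀ {n : ℕ} (C : Fin n → Set X), (∀ i, MeasurableSet (C i)) →
      mu (⋃ i, C i) ≤ ∑ i, mu (C i) := by
  intro n
  induction n with
  | zero => intro C _; simp [hmu.empty]
  | succ n ih =>
    intro C hC
    have hU : (⋃ i, C i) = C 0 ∪ ⋃ i : Fin n, C i.succ := by
      ext x; simp [Fin.exists_fin_succ]
    rw [hU, Fin.sum_univ_succ]
    calc mu (C 0 ∪ ⋃ i : Fin n, C i.succ)
        ≤ mu (C 0) + mu (⋃ i : Fin n, C i.succ) :=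
          hsub (hC 0) (MeasurableSet.iUnion fun i => hC i.succ)
      _ ≤ mu (C 0) + ∑ i : Fin n, mu (C i.succ) := by
          gcongr
          exact ih _ (fun i => hC i.succ)

/-- Any pairwise disjoint measurable family with a dominated simple function
gives a lower bound for the pan-integral. -/
lemma sum_le_panIntegral {ι : Type*} [Fintype ι] (C : ι → Set X)
    (hmeas : ∀ i, MeasurableSet (C i)) (hdisj : Pairwise (Function.onFun Disjoint C))
    (lam : ι → ℝ≥0) (g : X → ℝ≥0∞)
    (hle : ∀ x, ∑ i, (C i).indicator (fun _ => (lam i : ℝ≥0∞)) x ≤ g x) :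
    ∑ i, (lam i : ℝ≥0∞) * mu (C i) ≤ panIntegral mu g := by
  classical
  set N := Fintype.card ι with hN
  set e : ι ≃ Fin N := Fintype.equivFin ι with he
  set D : Fin (N + 1) → Set X := Fin.cons (⋃ i, C i)ᶜ (fun k => C (e.symm k)) with hD
  set lam' : Fin (N + 1) → ℝ≥0 := Fin.cons 0 (fun k => lam (e.symm k)) with hlam'
  have hD0 : D 0 = (⋃ i, C i)ᶜ := rfl
  have hDs : ∀ k : Fin N, D k.succ = C (e.symm k) := fun k => rfl
  have hl0 : lam' 0 = 0 := rfl
  have hls : ∀ k : Fin N, lam' k.succ = lam (e.symm k) := fun k => rfl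
  have hpart : IsPanPartition D := by
    refine ⟨?_, ?_, ?_⟩
    · intro k
      obtain rfl | ⟨j, rfl⟩ := k.eq_zero_or_eq_succ
      · rw [hD0]; exact (MeasurableSet.iUnion hmeas).compl
      · rw [hDs]; exact hmeas _
    · intro a b hab
      rw [Function.onFun, Set.disjoint_left]
      intro x hxa hxb
      obtain rfl | ⟨i, rfl⟩ := a.eq_zero_or_eq_succ <;>
        obtain rfl | ⟨j, rfl⟩ := b.eq_zero_or_eq_succ
      · exact hab rfl
      · rw [hD0] at hxa; rw [hDs] at hxb
        exact hxa (Set.mem_iUnion.mpr ⟨_, hxb⟩)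
      · rw [hD0] at hxb; rw [hDs] at hxa
        exact hxb (Set.mem_iUnion.mpr ⟨_, hxa⟩)
      · rw [hDs] at hxa hxb
        have hij : e.symm i ≠ e.symm j := fun h => hab (by
          have : i = j := e.symm.injective h
          rw [this])
        exact Set.disjoint_left.mp (hdisj hij) hxa hxb
    · ext x
      simp only [Set.mem_iUnion, Set.mem_univ, iff_true]
      by_cases hx : x ∈ ⋃ i, C i
      · obtain ⟨i, hi⟩ := Set.mem_iUnion.mp hx
        exact ⟨(e i).succ, by rw [hDs, Equiv.symm_apply_apply]; exact hi⟩
      · exact ⟨0, by rw [hD0]; exact hx⟩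
  have hle' : ∀ x, ∑ k, (D k).indicator (fun _ => (lam' k : ℝ≥0∞)) x ≤ g x := by
    intro x
    rw [Fin.sum_univ_succ]
    have h0 : (D 0).indicator (fun _ => (lam' 0 : ℝ≥0∞)) x = 0 := by
      rw [hl0]; simp
    rw [h0, zero_add]
    have hsum : ∑ k : Fin N, (D k.succ).indicator (fun _ => (lam' k.succ : ℝ≥0∞)) x
        = ∑ i : ι, (C i).indicator (fun _ => (lam i : ℝ≥0∞)) x := by
      rw [← Equiv.sum_comp e.symm (fun i => (C i).indicator (fun _ => (lam i : ℝ≥0∞)) x)]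
      refine Finset.sum_congr rfl fun k _ => ?_
      rw [hDs, hls]
    rw [hsum]
    exact hle x
  have hsum2 : ∑ i, (lam i : ℝ≥0∞) * mu (C i) = ∑ k, (lam' k : ℝ≥0∞) * mu (D k) := by
    rw [Fin.sum_univ_succ, hl0]
    simp only [ENNReal.coe_zero, zero_mul, zero_add]
    rw [← Equiv.sum_comp e.symm (fun i => (lam i : ℝ≥0∞) * mu (C i))]
    refine Finset.sum_congr rfl fun k _ => ?_
    rw [hDs, hls]
  rw [hsum2, panIntegral]
  exact le_iSup_of_le (N + 1) (le_iSup_of_le D (le_iSup_of_le hpart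
    (le_iSup_of_le lam' (le_iSup_of_le hle' le_rfl))))

/-- Monotonicity of the pan-integral in the integrand. -/
lemma panIntegral_mono_fun {g₁ g₂ : X → ℝ≥0∞} (h : ∀ x, g₁ x ≤ g₂ x) :
    panIntegral mu g₁ ≤ panIntegral mu g₂ := by
  rw [panIntegral, panIntegral]
  refine iSup_le fun n => iSup_le fun C => iSup_le fun hC => iSup_le fun lam =>
    iSup_le fun hle => ?_
  exact le_iSup_of_le n (le_iSup_of_le C (le_iSup_of_le hC (le_iSup_of_le lam
    (le_iSup_of_le (fun x => (hle x).trans (h x)) le_rfl))))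

open Classical in
/-- The value of a candidate simple function, or `0` if it is not admissible. -/
noncomputable def panVal (mu : Set X → ℝ≥0∞) (g : X → ℝ≥0∞)
    (s : Σ n : ℕ, (Fin n → Set X) × (Fin n → ℝ≥0)) : ℝ≥0∞ :=
  if IsPanPartition s.2.1 ∧ ∀ x, ∑ i, (s.2.1 i).indicator (fun _ => (s.2.2 i : ℝ≥0∞)) x ≤ g x
  then ∑ i, (s.2.2 i : ℝ≥0∞) * mu (s.2.1 i) else 0

lemma panIntegral_eq_iSup_panVal (mu : Set X → ℝ≥0∞) (g : X → ℝ≥0∞) :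
    panIntegral mu g = ⨆ s, panVal mu g s := by
  apply le_antisymm
  · rw [panIntegral]
    refine iSup_le fun n => iSup_le fun C => iSup_le fun hC => iSup_le fun lam =>
      iSup_le fun hle => ?_
    refine le_iSup_of_le ⟨n, C, lam⟩ ?_
    rw [panVal, if_pos ⟨hC, hle⟩]
  · refine iSup_le fun s => ?_
    rw [panVal]
    split_ifs with h
    · rw [panIntegral]
      exact le_iSup_of_le s.1 (le_iSup_of_le s.2.1 (le_iSup_of_le h.1
        (le_iSup_of_le s.2.2 (le_iSup_of_le h.2 le_rfl))))
    · exact zero_le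

end PanAux

theorem panIntegralOn_union_of_disjoint [MeasurableSpace X]
    (mu : Set X → ℝ≥0∞) (hmu : MonotoneMeasure mu) (hsub : PanSubadditive mu)
    (f : X → ℝ≥0∞) (hf : Measurable f)
    {A B : Set X} (hA : MeasurableSet A) (hB : MeasurableSet B)
    (hAB : A ∩ B = ∅) :
    panIntegralOn mu f (A ∪ B) = panIntegralOn mu f A + panIntegralOn mu f B := by
  classical
  have hABd : Disjoint A B := Set.disjoint_iff_inter_eq_empty.mpr hAB
  simp only [panIntegralOn]
  apply le_antisymm
  · -- pan-integral over the union is at most the sum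
    rw [panIntegral]
    refine iSup_le fun n => iSup_le fun C => iSup_le fun hC => iSup_le fun lam =>
      iSup_le fun hle => ?_
    obtain ⟨hCmeas, hCdisj, hCcover⟩ := hC
    have hcover : ∀ x : X, ∃ k, x ∈ C k := fun x =>
      Set.mem_iUnion.mp (hCcover.symm ▸ Set.mem_univ x)
    have key : ∀ S : Set X, MeasurableSet S → S ⊆ A ∪ B →
        ∑ k, (lam k : ℝ≥0∞) * mu (C k ∩ S) ≤ panIntegral mu (S.indicator f) := by
      intro S hS hSsub
      have hdisj' : Pairwise (Function.onFun Disjoint (fun k => C k ∩ S)) :=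
        fun i j hij => (hCdisj hij).mono Set.inter_subset_left Set.inter_subset_left
      refine sum_le_panIntegral _ (fun k => (hCmeas k).inter hS) hdisj' lam _ ?_
      intro x
      by_cases hxS : x ∈ S
      · obtain ⟨k, hk⟩ := hcover x
        rw [sum_indicator_of_mem' hdisj' (⟨hk, hxS⟩ : x ∈ C k ∩ S)]
        have h1 := hle x
        rw [sum_indicator_of_mem' hCdisj hk, Set.indicator_of_mem (hSsub hxS)] at h1
        rwa [Set.indicator_of_mem hxS]
      · rw [Set.indicator_of_notMem hxS]
        refine le_of_eq (Finset.sum_eq_zero fun k _ => ?_)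
        exact Set.indicator_of_notMem (fun h => hxS h.2) _
    have hstep : ∀ k, (lam k : ℝ≥0∞) * mu (C k) ≤
        (lam k : ℝ≥0∞) * mu (C k ∩ A) + (lam k : ℝ≥0∞) * mu (C k ∩ B) := by
      intro k
      by_cases hk : (lam k : ℝ≥0∞) = 0
      · simp [hk]
      · have hsubset : C k ⊆ A ∪ B := by
          intro x hx
          by_contra hxAB
          have h1 := hle x
          rw [sum_indicator_of_mem' hCdisj hx, Set.indicator_of_notMem hxAB] at h1
          exact hk (le_antisymm h1 (zero_le))
        have h2 : mu (C k) ≤ mu (C k ∩ A) + mu (C k ∩ B) := by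
          have h3 := hsub ((hCmeas k).inter hA) ((hCmeas k).inter hB)
          rwa [← Set.inter_union_distrib_left, Set.inter_eq_left.mpr hsubset] at h3
        calc (lam k : ℝ≥0∞) * mu (C k)
            ≤ (lam k : ℝ≥0∞) * (mu (C k ∩ A) + mu (C k ∩ B)) := by gcongr
          _ = _ := mul_add _ _ _
    calc ∑ k, (lam k : ℝ≥0∞) * mu (C k)
        ≤ ∑ k, ((lam k : ℝ≥0∞) * mu (C k ∩ A) + (lam k : ℝ≥0∞) * mu (C k ∩ B)) :=
          Finset.sum_le_sum fun k _ => hstep k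
      _ = ∑ k, (lam k : ℝ≥0∞) * mu (C k ∩ A) + ∑ k, (lam k : ℝ≥0∞) * mu (C k ∩ B) :=
          Finset.sum_add_distrib
      _ ≤ _ := add_le_add (key A hA Set.subset_union_left) (key B hB Set.subset_union_right)
  · -- the sum is at most the pan-integral over the union
    haveI : Nonempty (Σ n : ℕ, (Fin n → Set X) × (Fin n → ℝ≥0)) :=
      ⟨⟨0, Fin.elim0, Fin.elim0⟩⟩
    have hmonoA : panIntegral mu (A.indicator f) ≤ panIntegral mu ((A ∪ B).indicator f) :=
      panIntegral_mono_fun fun x =>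
        Set.indicator_le_indicator_of_subset Set.subset_union_left (fun _ => zero_le) x
    have hmonoB : panIntegral mu (B.indicator f) ≤ panIntegral mu ((A ∪ B).indicator f) :=
      panIntegral_mono_fun fun x =>
        Set.indicator_le_indicator_of_subset Set.subset_union_right (fun _ => zero_le) x
    rw [panIntegral_eq_iSup_panVal mu (A.indicator f),
      panIntegral_eq_iSup_panVal mu (B.indicator f)]
    refine ENNReal.iSup_add_iSup_le fun s t => ?_
    have hsA : panVal mu (A.indicator f) s ≤ panIntegral mu ((A ∪ B).indicator f) :=
      le_trans (le_iSup (panVal mu (A.indicator f)) s)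
        ((panIntegral_eq_iSup_panVal mu (A.indicator f)).ge.trans hmonoA)
    have htB : panVal mu (B.indicator f) t ≤ panIntegral mu ((A ∪ B).indicator f) :=
      le_trans (le_iSup (panVal mu (B.indicator f)) t)
        ((panIntegral_eq_iSup_panVal mu (B.indicator f)).ge.trans hmonoB)
    obtain ⟨n, P, lam⟩ := s
    obtain ⟨m, Q, kap⟩ := t
    simp only [panVal] at hsA htB ⊢
    split_ifs with h1 h2 h2
    · -- both admissible: the product partition argument
      obtain ⟨⟨hPmeas, hPdisj, hPcover⟩, hleP⟩ := h1
      obtain ⟨⟨hQmeas, hQdisj, hQcover⟩, hleQ⟩ := h2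
      set E : Fin n × Fin m → Set X := fun p => P p.1 ∩ Q p.2 with hE
      have hEmeas : ∀ p, MeasurableSet (E p) := fun p => (hPmeas p.1).inter (hQmeas p.2)
      have hEdisj : Pairwise (Function.onFun Disjoint E) := by
        intro p q hpq
        rw [Function.onFun, Set.disjoint_left]
        intro x hxp hxq
        apply hpq
        have e1 : p.1 = q.1 := by
          by_contra hne
          exact Set.disjoint_left.mp (hPdisj hne) hxp.1 hxq.1
        have e2 : p.2 = q.2 := by
          by_contra hne
          exact Set.disjoint_left.mp (hQdisj hne) hxp.2 hxq.2
        exact Prod.ext e1 e2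
      have hPc : ∀ x : X, ∃ i, x ∈ P i := fun x =>
        Set.mem_iUnion.mp (hPcover.symm ▸ Set.mem_univ x)
      have hQc : ∀ x : X, ∃ j, x ∈ Q j := fun x =>
        Set.mem_iUnion.mp (hQcover.symm ▸ Set.mem_univ x)
      have hEle : ∀ x, ∑ p : Fin n × Fin m,
          (E p).indicator (fun _ => ((lam p.1 + kap p.2 : ℝ≥0) : ℝ≥0∞)) x
          ≤ (A ∪ B).indicator f x := by
        intro x
        obtain ⟨i, hi⟩ := hPc x
        obtain ⟨j, hj⟩ := hQc x
        rw [sum_indicator_of_mem' hEdisj (⟨hi, hj⟩ : x ∈ E (i, j))]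
        have h1 := hleP x; rw [sum_indicator_of_mem' hPdisj hi] at h1
        have h2 := hleQ x; rw [sum_indicator_of_mem' hQdisj hj] at h2
        have h3 : (A ∪ B).indicator f x = A.indicator f x + B.indicator f x :=
          congrFun (Set.indicator_union_of_disjoint hABd f) x
        rw [h3]
        push_cast
        exact add_le_add h1 h2
      have hkey := sum_le_panIntegral (mu := mu) E hEmeas hEdisj
        (fun p => lam p.1 + kap p.2) ((A ∪ B).indicator f) hEle
      refine le_trans ?_ hkey
      have hsplit : ∑ p : Fin n × Fin m, ((lam p.1 + kap p.2 : ℝ≥0) : ℝ≥0∞) * mu (E p)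
          = ∑ p : Fin n × Fin m, (lam p.1 : ℝ≥0∞) * mu (E p)
            + ∑ p : Fin n × Fin m, (kap p.2 : ℝ≥0∞) * mu (E p) := by
        rw [← Finset.sum_add_distrib]
        refine Finset.sum_congr rfl fun p _ => ?_
        push_cast
        rw [add_mul]
      rw [hsplit]
      refine add_le_add ?_ ?_
      · rw [Fintype.sum_prod_type]
        refine Finset.sum_le_sum fun i _ => ?_
        dsimp only
        rw [← Finset.mul_sum]
        gcongr
        have hP' : P i = ⋃ j, E (i, j) := by
          simp only [hE]
          rw [← Set.inter_iUnion, hQcover, Set.inter_univ]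
        rw [hP']
        exact mu_iUnion_le hmu hsub _ (fun j => hEmeas (i, j))
      · rw [Fintype.sum_prod_type_right]
        refine Finset.sum_le_sum fun j _ => ?_
        dsimp only
        rw [← Finset.mul_sum]
        gcongr
        have hQ' : Q j = ⋃ i, E (i, j) := by
          simp only [hE]
          rw [← Set.iUnion_inter, hPcover, Set.univ_inter]
        rw [hQ']
        exact mu_iUnion_le hmu hsub _ (fun i => hEmeas (i, j))
    · rw [add_zero]
      rw [if_pos h1] at hsA
      exact hsA
    · rw [zero_add]
      rw [if_pos h2] at htB
      exact htB
    · simp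
end

section
/- (Positive-sets-disjointness additivity) Let (X, 𝒜, μ) be a monotone measure space with μ subadditive and let f, g : X → [0, ∞] be measurable with {x : f(x) > 0} ∩ {x : g(x) > 0} = ∅. Then ∫^pan (f+g) dμ = ∫^pan f dμ + ∫^pan g dμ. -/
open Set Filter
open scoped ENNReal NNReal Topology

variable {X : Type*}

section PanAux

variable [MeasurableSpace X]

private lemma le_panIntegral_of_partition {ι : Type*} [Fintype ι]
    (mu : Set X → ℝ≥0∞) (f : X → ℝ≥0∞) (A : ι → Set X)
    (hmeas : ∀ i, MeasurableSet (A i)) (hdis : Pairwise (Function.onFun Disjoint A))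
    (hcov : (⋃ i, A i) = Set.univ) (lam : ι → ℝ≥0)
    (hle : ∀ x, ∑ i, Set.indicator (A i) (fun _ => (lam i : ℝ≥0∞)) x ≤ f x) :
    ∑ i, (lam i : ℝ≥0∞) * mu (A i) ≤ panIntegral mu f := by
  classical
  set n := Fintype.card ι with hn
  set e : Fin n ≃ ι := (Fintype.equivFin ι).symm with he
  have hpart : IsPanPartition (fun k => A (e k)) := by
    refine ⟨fun k => hmeas _, ?_, ?_⟩
    · intro i j hij
      exact hdis fun h => hij (e.injective h)
    · rw [← hcov]
      exact e.iSup_comp (g := A)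
  have hsum : ∑ k : Fin n, ((lam (e k) : ℝ≥0∞)) * mu (A (e k))
      = ∑ i, (lam i : ℝ≥0∞) * mu (A i) :=
    e.sum_comp fun i => (lam i : ℝ≥0∞) * mu (A i)
  have hle' : ∀ x, ∑ k : Fin n,
      Set.indicator (A (e k)) (fun _ => ((lam (e k) : ℝ≥0∞))) x ≤ f x := by
    intro x
    rw [e.sum_comp fun i => Set.indicator (A i) (fun _ => (lam i : ℝ≥0∞)) x]
    exact hle x
  rw [← hsum]
  refine le_iSup_of_le n ?_
  refine le_iSup_of_le (fun k => A (e k)) ?_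
  refine le_iSup_of_le hpart ?_
  refine le_iSup_of_le (fun k => lam (e k)) ?_
  exact le_iSup_of_le hle' le_rfl

private lemma panIntegral_le_of_forall {mu : Set X → ℝ≥0∞} {f : X → ℝ≥0∞} {c : ℝ≥0∞}
    (h : ∀ (n : ℕ) (A : Fin n → Set X), IsPanPartition A → ∀ lam : Fin n → ℝ≥0,
      (∀ x, ∑ i, Set.indicator (A i) (fun _ => (lam i : ℝ≥0∞)) x ≤ f x) →
      ∑ i, (lam i : ℝ≥0∞) * mu (A i) ≤ c) :
    panIntegral mu f ≤ c :=
  iSup_le fun n => iSup_le fun A => iSup_le fun hA => iSup_le fun lam =>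
    iSup_le fun hlam => h n A hA lam hlam

private lemma panIntegral_mono (mu : Set X → ℝ≥0∞) {f g : X → ℝ≥0∞} (h : ∀ x, f x ≤ g x) :
    panIntegral mu f ≤ panIntegral mu g := by
  refine panIntegral_le_of_forall fun n A hA lam hlam => ?_
  exact le_panIntegral_of_partition mu g A hA.1 hA.2.1 hA.2.2 lam
    fun x => (hlam x).trans (h x)

private lemma ennreal_add_le_of_forall_lt {x y z : ℝ≥0∞} (hx : x ≠ 0) (hy : y ≠ 0)
    (h : ∀ u < x, ∀ v < y, u + v ≤ z) : x + y ≤ z := by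
  by_contra hc
  push_neg at hc
  obtain ⟨u, hu, v, hv, hzu⟩ := ENNReal.exists_lt_add_of_lt_add hc hx hy
  exact absurd (h u hu v hv) (not_le.mpr hzu)

end PanAux

theorem panIntegral_add_of_disjoint_pos_sets [MeasurableSpace X]
    (mu : Set X → ℝ≥0∞) (hmu : MonotoneMeasure mu) (hsub : PanSubadditive mu)
    (f g : X → ℝ≥0∞) (hf : Measurable f) (hg : Measurable g)
    (hdisj : {x | 0 < f x} ∩ {x | 0 < g x} = ∅) :
    panIntegral mu (fun x => f x + g x) = panIntegral mu f + panIntegral mu g := by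
  classical
  set F : Set X := {x | 0 < f x} with hFdef
  set G : Set X := {x | 0 < g x} with hGdef
  have hFmeas : MeasurableSet F := measurableSet_lt measurable_const hf
  have hGmeas : MeasurableSet G := measurableSet_lt measurable_const hg
  have hgF : ∀ x ∈ F, g x = 0 := by
    intro x hx
    by_contra hgx
    exact (Set.eq_empty_iff_forall_notMem.mp hdisj x) ⟨hx, pos_iff_ne_zero.mpr hgx⟩
  have hfG : ∀ x ∈ G, f x = 0 := by
    intro x hx
    by_contra hfx
    exact (Set.eq_empty_iff_forall_notMem.mp hdisj x) ⟨pos_iff_ne_zero.mpr hfx, hx⟩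
  refine le_antisymm ?_ ?_
  · -- upper bound: uses subadditivity
    refine panIntegral_le_of_forall fun n C hC tau htau => ?_
    have key : ∀ (i : Fin n), ∀ x ∈ C i, (tau i : ℝ≥0∞) ≤ f x + g x := by
      intro i x hx
      calc (tau i : ℝ≥0∞) = Set.indicator (C i) (fun _ => (tau i : ℝ≥0∞)) x :=
            (Set.indicator_of_mem hx fun _ => (tau i : ℝ≥0∞)).symm
        _ ≤ ∑ j, Set.indicator (C j) (fun _ => (tau j : ℝ≥0∞)) x :=
            Finset.single_le_sum
              (f := fun j => Set.indicator (C j) (fun _ => (tau j : ℝ≥0∞)) x)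
              (fun j _ => zero_le) (Finset.mem_univ i)
        _ ≤ f x + g x := htau x
    -- restricted sums are dominated by the respective pan-integrals
    have hrestrict : ∀ (S : Set X) (h : X → ℝ≥0∞), MeasurableSet S →
        (∀ x ∈ S, ∀ i : Fin n, x ∈ C i → (tau i : ℝ≥0∞) ≤ h x) →
        ∑ i, (tau i : ℝ≥0∞) * mu (C i ∩ S) ≤ panIntegral mu h := by
      intro S h hSmeas hkey
      have hmain := le_panIntegral_of_partition (ι := Option (Fin n)) mu h
        (fun o => o.elim Sᶜ (fun i => C i ∩ S))
        (fun o => by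
          cases o with
          | none => exact hSmeas.compl
          | some i => exact (hC.1 i).inter hSmeas)
        (by
          intro o o' hoo'
          cases o with
          | none =>
            cases o' with
            | none => exact absurd rfl hoo'
            | some j =>
              exact (disjoint_compl_left.mono_right Set.inter_subset_right :
                Disjoint Sᶜ (C j ∩ S))
          | some i =>
            cases o' with
            | none =>
              exact ((disjoint_compl_left.mono_right Set.inter_subset_right :
                Disjoint Sᶜ (C i ∩ S))).symm
            | some j =>
              have hij : i ≠ j := fun hh => hoo' (by rw [hh])
              exact (hC.2.1 hij).mono Set.inter_subset_left Set.inter_subset_left)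
        (by
          apply Set.eq_univ_of_forall
          intro x
          by_cases hxS : x ∈ S
          · have hx : x ∈ ⋃ i, C i := hC.2.2 ▸ Set.mem_univ x
            obtain ⟨i, hi⟩ := Set.mem_iUnion.mp hx
            exact Set.mem_iUnion.mpr ⟨some i, ⟨hi, hxS⟩⟩
          · exact Set.mem_iUnion.mpr ⟨none, hxS⟩)
        (fun o => o.elim 0 tau)
        (by
          intro x
          rw [Fintype.sum_option]
          simp only [Option.elim]
          by_cases hxS : x ∈ S
          · rw [show Set.indicator Sᶜ (fun _ => ((0 : ℝ≥0) : ℝ≥0∞)) x = 0 by simp,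
              zero_add]
            have hx : x ∈ ⋃ i, C i := hC.2.2 ▸ Set.mem_univ x
            obtain ⟨i0, hi0⟩ := Set.mem_iUnion.mp hx
            have hsingle : ∑ i, Set.indicator (C i ∩ S) (fun _ => (tau i : ℝ≥0∞)) x
                = Set.indicator (C i0 ∩ S) (fun _ => (tau i0 : ℝ≥0∞)) x := by
              refine Finset.sum_eq_single_of_mem i0 (Finset.mem_univ i0) ?_
              intro j _ hj
              refine Set.indicator_of_notMem ?_ _
              intro hxj
              exact Set.disjoint_left.mp (hC.2.1 hj) hxj.1 hi0
            rw [hsingle, Set.indicator_of_mem (Set.mem_inter hi0 hxS)]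
            exact hkey x hxS i0 hi0
          · have hzero : ∀ i : Fin n,
                Set.indicator (C i ∩ S) (fun _ => (tau i : ℝ≥0∞)) x = 0 :=
              fun i => Set.indicator_of_notMem (fun hh => hxS hh.2) _
            simp [hzero])
      calc ∑ i, (tau i : ℝ≥0∞) * mu (C i ∩ S)
          = ∑ o : Option (Fin n), ((o.elim 0 tau : ℝ≥0) : ℝ≥0∞) *
              mu (o.elim Sᶜ (fun i => C i ∩ S)) := by
            rw [Fintype.sum_option]
            simp
        _ ≤ panIntegral mu h := hmain
    have hFle : ∑ i, (tau i : ℝ≥0∞) * mu (C i ∩ F) ≤ panIntegral mu f := by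
      refine hrestrict F f hFmeas fun x hxF i hxC => ?_
      have := key i x hxC
      rwa [hgF x hxF, add_zero] at this
    have hGle : ∑ i, (tau i : ℝ≥0∞) * mu (C i ∩ G) ≤ panIntegral mu g := by
      refine hrestrict G g hGmeas fun x hxG i hxC => ?_
      have := key i x hxC
      rwa [hfG x hxG, zero_add] at this
    calc ∑ i, (tau i : ℝ≥0∞) * mu (C i)
        ≤ ∑ i, ((tau i : ℝ≥0∞) * mu (C i ∩ F) + (tau i : ℝ≥0∞) * mu (C i ∩ G)) := by
          refine Finset.sum_le_sum fun i _ => ?_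
          rcases eq_or_ne (tau i) 0 with h0 | h0
          · simp [h0]
          · have hCsub : C i ⊆ F ∪ G := by
              intro x hx
              by_contra hxFG
              have hfx : f x = 0 := by
                by_contra hfx
                exact hxFG (Or.inl (pos_iff_ne_zero.mpr hfx))
              have hgx : g x = 0 := by
                by_contra hgx
                exact hxFG (Or.inr (pos_iff_ne_zero.mpr hgx))
              have hk := key i x hx
              rw [hfx, hgx, add_zero] at hk
              exact h0 (by exact_mod_cast le_zero_iff.mp hk)
            have hmono : mu (C i) ≤ mu ((C i ∩ F) ∪ (C i ∩ G)) := by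
              refine hmu.mono (hC.1 i)
                (((hC.1 i).inter hFmeas).union ((hC.1 i).inter hGmeas)) ?_
              rw [← Set.inter_union_distrib_left]
              exact Set.subset_inter Set.Subset.rfl hCsub
            have hsubadd : mu ((C i ∩ F) ∪ (C i ∩ G)) ≤ mu (C i ∩ F) + mu (C i ∩ G) :=
              hsub ((hC.1 i).inter hFmeas) ((hC.1 i).inter hGmeas)
            calc (tau i : ℝ≥0∞) * mu (C i)
                ≤ (tau i : ℝ≥0∞) * (mu (C i ∩ F) + mu (C i ∩ G)) :=
                  mul_le_mul_right (hmono.trans hsubadd) _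
              _ = (tau i : ℝ≥0∞) * mu (C i ∩ F) + (tau i : ℝ≥0∞) * mu (C i ∩ G) := by
                  rw [mul_add]
      _ = ∑ i, (tau i : ℝ≥0∞) * mu (C i ∩ F) + ∑ i, (tau i : ℝ≥0∞) * mu (C i ∩ G) :=
          Finset.sum_add_distrib
      _ ≤ panIntegral mu f + panIntegral mu g := add_le_add hFle hGle
  · -- lower bound (superadditivity for disjoint supports)
    -- the key combination step
    have hcomb : ∀ (n : ℕ) (A : Fin n → Set X), IsPanPartition A →
        ∀ lamA : Fin n → ℝ≥0,
        (∀ x, ∑ i, Set.indicator (A i) (fun _ => (lamA i : ℝ≥0∞)) x ≤ f x) →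
        ∀ (m : ℕ) (B : Fin m → Set X), IsPanPartition B →
        ∀ lamB : Fin m → ℝ≥0,
        (∀ x, ∑ j, Set.indicator (B j) (fun _ => (lamB j : ℝ≥0∞)) x ≤ g x) →
        ∑ i, (lamA i : ℝ≥0∞) * mu (A i) + ∑ j, (lamB j : ℝ≥0∞) * mu (B j)
          ≤ panIntegral mu (fun x => f x + g x) := by
      intro n A hA lamA hlamA m B hB lamB hlamB
      have keyA : ∀ (i : Fin n), ∀ x ∈ A i, (lamA i : ℝ≥0∞) ≤ f x := by
        intro i x hx
        calc (lamA i : ℝ≥0∞) = Set.indicator (A i) (fun _ => (lamA i : ℝ≥0∞)) x :=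
              (Set.indicator_of_mem hx fun _ => (lamA i : ℝ≥0∞)).symm
          _ ≤ ∑ j, Set.indicator (A j) (fun _ => (lamA j : ℝ≥0∞)) x :=
              Finset.single_le_sum
                (f := fun j => Set.indicator (A j) (fun _ => (lamA j : ℝ≥0∞)) x)
                (fun j _ => zero_le) (Finset.mem_univ i)
          _ ≤ f x := hlamA x
      have keyB : ∀ (j : Fin m), ∀ x ∈ B j, (lamB j : ℝ≥0∞) ≤ g x := by
        intro j x hx
        calc (lamB j : ℝ≥0∞) = Set.indicator (B j) (fun _ => (lamB j : ℝ≥0∞)) x :=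
              (Set.indicator_of_mem hx fun _ => (lamB j : ℝ≥0∞)).symm
          _ ≤ ∑ k, Set.indicator (B k) (fun _ => (lamB k : ℝ≥0∞)) x :=
              Finset.single_le_sum
                (f := fun k => Set.indicator (B k) (fun _ => (lamB k : ℝ≥0∞)) x)
                (fun k _ => zero_le) (Finset.mem_univ j)
          _ ≤ g x := hlamB x
      -- the combined partition, indexed by `Option (Fin n ⊕ Fin m)`
      set D : Option (Fin n ⊕ Fin m) → Set X :=
        fun o => o.elim (F ∪ G)ᶜ (Sum.elim (fun i => A i ∩ F) (fun j => B j ∩ G)) with hD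
      set lamD : Option (Fin n ⊕ Fin m) → ℝ≥0 :=
        fun o => o.elim 0 (Sum.elim lamA lamB) with hlamD
      have hFG : Disjoint F G := Set.disjoint_iff_inter_eq_empty.mpr hdisj
      have hmain := le_panIntegral_of_partition (ι := Option (Fin n ⊕ Fin m)) mu
        (fun x => f x + g x) D
        (fun o => by
          cases o with
          | none => exact (hFmeas.union hGmeas).compl
          | some s =>
            cases s with
            | inl i => exact (hA.1 i).inter hFmeas
            | inr j => exact (hB.1 j).inter hGmeas)
        (by
          have hDsubF : ∀ i : Fin n, A i ∩ F ⊆ F := fun i => Set.inter_subset_right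
          have hDsubG : ∀ j : Fin m, B j ∩ G ⊆ G := fun j => Set.inter_subset_right
          have hnone : ∀ s : Fin n ⊕ Fin m, Disjoint (D none) (D (some s)) := by
            intro s
            cases s with
            | inl i =>
              exact disjoint_compl_left.mono_right
                ((hDsubF i).trans Set.subset_union_left)
            | inr j =>
              exact disjoint_compl_left.mono_right
                ((hDsubG j).trans Set.subset_union_right)
          intro o o' hoo'
          cases o with
          | none =>
            cases o' with
            | none => exact absurd rfl hoo'
            | some s => exact hnone s
          | some s =>
            cases o' with
            | none => exact (hnone s).symm
            | some s' =>
              cases s with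
              | inl i =>
                cases s' with
                | inl i' =>
                  have hii' : i ≠ i' := fun hh => hoo' (by rw [hh])
                  exact (hA.2.1 hii').mono Set.inter_subset_left Set.inter_subset_left
                | inr j =>
                  exact hFG.mono Set.inter_subset_right Set.inter_subset_right
              | inr j =>
                cases s' with
                | inl i =>
                  exact hFG.symm.mono Set.inter_subset_right Set.inter_subset_right
                | inr j' =>
                  have hjj' : j ≠ j' := fun hh => hoo' (by rw [hh])
                  exact (hB.2.1 hjj').mono Set.inter_subset_left Set.inter_subset_left)
        (by
          apply Set.eq_univ_of_forall
          intro x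
          by_cases hxF : x ∈ F
          · have hx : x ∈ ⋃ i, A i := hA.2.2 ▸ Set.mem_univ x
            obtain ⟨i, hi⟩ := Set.mem_iUnion.mp hx
            exact Set.mem_iUnion.mpr ⟨some (Sum.inl i), ⟨hi, hxF⟩⟩
          · by_cases hxG : x ∈ G
            · have hx : x ∈ ⋃ j, B j := hB.2.2 ▸ Set.mem_univ x
              obtain ⟨j, hj⟩ := Set.mem_iUnion.mp hx
              exact Set.mem_iUnion.mpr ⟨some (Sum.inr j), ⟨hj, hxG⟩⟩
            · exact Set.mem_iUnion.mpr ⟨none, fun hh => hh.elim hxF hxG⟩)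
        lamD
        (by
          intro x
          rw [Fintype.sum_option, Fintype.sum_sum_type]
          have h0 : Set.indicator (D none) (fun _ => ((lamD none : ℝ≥0) : ℝ≥0∞)) x = 0 := by
            simp [hlamD]
          rw [h0, zero_add]
          have hfpart : ∑ i, Set.indicator (D (some (Sum.inl i)))
              (fun _ => ((lamD (some (Sum.inl i)) : ℝ≥0) : ℝ≥0∞)) x ≤ f x := by
            refine le_trans (Finset.sum_le_sum fun i _ => ?_) (hlamA x)
            exact Set.indicator_le_indicator_of_subset Set.inter_subset_left
              (fun _ => zero_le) x
          have hgpart : ∑ j, Set.indicator (D (some (Sum.inr j)))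
              (fun _ => ((lamD (some (Sum.inr j)) : ℝ≥0) : ℝ≥0∞)) x ≤ g x := by
            refine le_trans (Finset.sum_le_sum fun j _ => ?_) (hlamB x)
            exact Set.indicator_le_indicator_of_subset Set.inter_subset_left
              (fun _ => zero_le) x
          exact add_le_add hfpart hgpart)
      refine le_trans (le_of_eq ?_) hmain
      rw [Fintype.sum_option, Fintype.sum_sum_type]
      have hnone0 : ((lamD none : ℝ≥0) : ℝ≥0∞) * mu (D none) = 0 := by
        simp [hlamD]
      rw [hnone0, zero_add]
      congr 1
      · refine Finset.sum_congr rfl fun i _ => ?_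
        rcases eq_or_ne (lamA i) 0 with h0 | h0
        · simp [hlamD, hD, h0]
        · have hsubF : A i ⊆ F := by
            intro x hx
            have := keyA i x hx
            have hpos : (0 : ℝ≥0∞) < f x :=
              lt_of_lt_of_le (by exact_mod_cast pos_iff_ne_zero.mpr h0) this
            exact hpos
          have : A i ∩ F = A i := Set.inter_eq_left.mpr hsubF
          simp [hlamD, hD, this]
      · refine Finset.sum_congr rfl fun j _ => ?_
        rcases eq_or_ne (lamB j) 0 with h0 | h0
        · simp [hlamD, hD, h0]
        · have hsubG : B j ⊆ G := by
            intro x hx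
            have := keyB j x hx
            have hpos : (0 : ℝ≥0∞) < g x :=
              lt_of_lt_of_le (by exact_mod_cast pos_iff_ne_zero.mpr h0) this
            exact hpos
          have : B j ∩ G = B j := Set.inter_eq_left.mpr hsubG
          simp [hlamD, hD, this]
    -- now combine, treating the degenerate zero cases separately
    rcases eq_or_ne (panIntegral mu f) 0 with hf0 | hf0
    · rw [hf0, zero_add]
      exact panIntegral_mono mu fun x => le_add_self
    rcases eq_or_ne (panIntegral mu g) 0 with hg0 | hg0
    · rw [hg0, add_zero]
      exact panIntegral_mono mu fun x => le_self_add
    refine ennreal_add_le_of_forall_lt hf0 hg0 fun u hu v hv => ?_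
    have hu' := hu
    have hv' := hv
    rw [panIntegral] at hu' hv'
    simp only [lt_iSup_iff] at hu' hv'
    obtain ⟨n, A, hA, lamA, hlamA, hult⟩ := hu'
    obtain ⟨m, B, hB, lamB, hlamB, hvlt⟩ := hv'
    exact le_trans (add_le_add hult.le hvlt.le)
      (hcomb n A hA lamA hlamA m B hB lamB hlamB)
end
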